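/- (Combing and cabling commute, positive looping case) In the Artin braid group B_{m+n}, for every 1 ≤ k ≤ m−1 and every 1 ≤ q ≤ n, pushing the positive looping of a q-strand cable around the k-th fixed strand through the fixed crossing Σ_k yields the positive looping of the cable around the (k+1)-st fixed strand; explicitly: Σ_k · ( ∏_{l=0}^{q−1} λ_l a_k λ_l^{−1} ) = ( ∏_{l=0}^{q−1} λ_l a_{k+1} λ_l^{−1} ) · Σ_k, products taken left to right in increasing l. -/
import Mathlib


/-- Defining relations of the Artin braid group on `N` strands, with generators
indexed by `Fin (N-1)` (index `s : Fin (N-1)` corresponds to the 1-based generator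
`σ_{s+1}`): the far commutation relations and the braid relations. -/
def braidRels (N : ℕ) : Set (FreeGroup (Fin (N - 1))) :=
  {x | ∃ s t : Fin (N - 1), (s : ℕ) + 2 ≤ (t : ℕ) ∧
      x = FreeGroup.of s * FreeGroup.of t * (FreeGroup.of s)⁻¹ * (FreeGroup.of t)⁻¹} ∪
  {x | ∃ s t : Fin (N - 1), (s : ℕ) + 1 = (t : ℕ) ∧
      x = FreeGroup.of s * FreeGroup.of t * FreeGroup.of s *
          (FreeGroup.of t)⁻¹ * (FreeGroup.of s)⁻¹ * (FreeGroup.of t)⁻¹}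

/-- The Artin braid group on `N` strands. -/
abbrev BraidGroup (N : ℕ) := PresentedGroup (braidRels N)

/-- The generator `σ_s` (1-based, `1 ≤ s ≤ N-1`); junk value `1` out of range. -/
def sig (N s : ℕ) : BraidGroup N :=
  if h : 1 ≤ s ∧ s ≤ N - 1 then PresentedGroup.of ⟨s - 1, by omega⟩ else 1

/-- The loop element `a_i = σ_m σ_{m-1} ⋯ σ_{i+1} · σ_i² · σ_{i+1}⁻¹ ⋯ σ_m⁻¹`
(so `a_m = σ_m²`) in the braid group on `N` strands, `m` of which are fixed. -/
def loop (N m i : ℕ) : BraidGroup N :=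
  (((List.range (m - i)).map (fun l => sig N (m - l))).prod) * (sig N i) ^ 2 *
    (((List.range (m - i)).map (fun l => sig N (m - l))).prod)⁻¹

/-- `λ_l := σ_{m+l} σ_{m+l-1} ⋯ σ_{m+1}`, with `λ_0 := 1`. -/
def lam (N m l : ℕ) : BraidGroup N :=
  ((List.range l).map (fun t => sig N (m + l - t))).prod

/-- The positive looping `∏_{l=0}^{q-1} λ_l a_j λ_l⁻¹` of a `q`-strand cable of
moving strands around the `j`-th fixed strand. -/
def cable (N m j q : ℕ) : BraidGroup N :=
  ((List.range q).map (fun l => lam N m l * loop N m j * (lam N m l)⁻¹)).prod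

lemma rel_one {N : ℕ} {r : FreeGroup (Fin (N-1))} (h : r ∈ braidRels N) :
    PresentedGroup.mk (braidRels N) r = 1 :=
  (QuotientGroup.eq_one_iff r).2 (Subgroup.subset_normalClosure h)

lemma sig_comm (N s t : ℕ) (h : s + 2 ≤ t) : Commute (sig N s) (sig N t) := by
  unfold sig
  split_ifs with h1 h2 h2
  · have hr : (FreeGroup.of (⟨s-1, by omega⟩ : Fin (N-1)) * FreeGroup.of (⟨t-1, by omega⟩ : Fin (N-1)) * (FreeGroup.of (⟨s-1, by omega⟩ : Fin (N-1)))⁻¹ * (FreeGroup.of (⟨t-1, by omega⟩ : Fin (N-1)))⁻¹) ∈ braidRels N :=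
      Or.inl ⟨⟨s-1, by omega⟩, ⟨t-1, by omega⟩, by simp; omega, rfl⟩
    have h2 := rel_one hr
    simp only [map_mul, map_inv] at h2
    exact commutatorElement_eq_one_iff_commute.mp h2
  · exact Commute.one_right _
  · exact Commute.one_left _
  · exact Commute.one_right _

lemma sig_braid (N s : ℕ) (h1 : 1 ≤ s) (h2 : s + 1 ≤ N - 1) :
    sig N s * sig N (s+1) * sig N s = sig N (s+1) * sig N s * sig N (s+1) := by
  have hs : sig N s = PresentedGroup.mk (braidRels N) (FreeGroup.of ⟨s-1, by omega⟩) := by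
    unfold sig; rw [dif_pos ⟨h1, by omega⟩]; rfl
  have ht : sig N (s+1) = PresentedGroup.mk (braidRels N) (FreeGroup.of ⟨s, by omega⟩) := by
    unfold sig; rw [dif_pos ⟨by omega, h2⟩]; rfl
  have hr : (FreeGroup.of (⟨s-1, by omega⟩ : Fin (N-1)) * FreeGroup.of (⟨s, by omega⟩ : Fin (N-1)) * FreeGroup.of (⟨s-1, by omega⟩ : Fin (N-1)) * (FreeGroup.of (⟨s, by omega⟩ : Fin (N-1)))⁻¹ * (FreeGroup.of (⟨s-1, by omega⟩ : Fin (N-1)))⁻¹ * (FreeGroup.of (⟨s, by omega⟩ : Fin (N-1)))⁻¹) ∈ braidRels N :=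
    Or.inr ⟨⟨s-1, by omega⟩, ⟨s, by omega⟩, by simp; omega, rfl⟩
  have h3 := rel_one hr
  simp only [map_mul, map_inv] at h3
  rw [hs, ht]
  set a := PresentedGroup.mk (braidRels N) (FreeGroup.of (⟨s-1, by omega⟩ : Fin (N-1)))
  set b := PresentedGroup.mk (braidRels N) (FreeGroup.of (⟨s, by omega⟩ : Fin (N-1)))
  calc a*b*a = (a*b*a*b⁻¹*a⁻¹*b⁻¹)*(b*a*b) := by group
    _ = b*a*b := by rw [h3]; group

lemma comm_prod {G : Type*} [Group G] (a : G) (L : List ℕ) (f : ℕ → G)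
    (h : ∀ x ∈ L, Commute a (f x)) : Commute a ((L.map f).prod) := by
  apply Commute.list_prod_right
  intro y hy
  simp only [List.mem_map] at hy
  obtain ⟨x, hx, rfl⟩ := hy
  exact h x hx

lemma sig_comm_lam (N m k l : ℕ) (hk : k + 1 ≤ m) : Commute (sig N k) (lam N m l) := by
  apply comm_prod
  intro t ht
  simp only [List.mem_range] at ht
  exact sig_comm N k (m + l - t) (by omega)

lemma key (N m k : ℕ) (hk1 : 1 ≤ k) (hk2 : k + 1 ≤ m) (hN : m ≤ N - 1) :
    sig N k * loop N m k = loop N m (k+1) * sig N k := by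
  unfold loop
  have hsplit : m - k = (m - (k+1)) + 1 := by omega
  have hlast : ((([m - (k+1)]).map (fun l => sig N (m - l))).prod) = sig N (k+1) := by
    simp only [List.map_cons, List.map_nil, List.prod_cons, List.prod_nil, mul_one]
    congr 1; omega
  rw [hsplit, List.range_succ, List.map_append, List.prod_append, hlast, sq, sq]
  set P := ((List.range (m - (k+1))).map (fun l => sig N (m - l))).prod with hP
  set a := sig N k
  set b := sig N (k+1)
  have hc : Commute a P := by
    apply comm_prod
    intro x hx
    simp only [List.mem_range] at hx
    exact sig_comm N k (m - x) (by omega)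
  have hb := sig_braid N k hk1 (by omega)
  have hcore : a * (b * (a*a) * b⁻¹) = (b*b) * a := by
    calc a * (b*(a*a)*b⁻¹) = (a*b*a)*a*b⁻¹ := by group
      _ = (b*a*b)*a*b⁻¹ := by rw [hb]
      _ = b*(a*b*a)*b⁻¹ := by group
      _ = b*(b*a*b)*b⁻¹ := by rw [hb]
      _ = (b*b)*a := by group
  calc a * (P * b * (a*a) * (P*b)⁻¹)
      = (a*P) * (b*(a*a)*b⁻¹) * P⁻¹ := by group
    _ = (P*a) * (b*(a*a)*b⁻¹) * P⁻¹ := by rw [hc.eq]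
    _ = P * (a*(b*(a*a)*b⁻¹)) * P⁻¹ := by group
    _ = P * ((b*b)*a) * P⁻¹ := by rw [hcore]
    _ = P * (b*b) * (a * P⁻¹) := by group
    _ = P * (b*b) * (P⁻¹ * a) := by rw [hc.inv_right.eq]
    _ = P * (b*b) * P⁻¹ * a := by group

lemma conj_prod {G : Type*} [Group G] (a : G) (L : List ℕ) (f g : ℕ → G)
    (h : ∀ x ∈ L, a * f x = g x * a) : a * (L.map f).prod = (L.map g).prod * a := by
  induction L with
  | nil => simp
  | cons x xs ih =>
    rw [List.map_cons, List.prod_cons, List.map_cons, List.prod_cons, ← mul_assoc,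
      h x (by simp), mul_assoc, ih (fun y hy => h y (by simp [hy])), ← mul_assoc]

/-- Combing and cabling commute (positive looping case): pushing the positive
looping of a `q`-strand cable around the `k`-th fixed strand through the fixed
crossing `Σ_k` yields the positive looping around the `(k+1)`-st fixed strand. -/
theorem combing_cabling_commute_pos (m n k q : ℕ) (hm : 2 ≤ m) (hn : 1 ≤ n)
    (hk1 : 1 ≤ k) (hk2 : k ≤ m - 1) (hq1 : 1 ≤ q) (hq2 : q ≤ n) :
    sig (m + n) k * cable (m + n) m k q =
      cable (m + n) m (k + 1) q * sig (m + n) k := by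
  unfold cable
  apply conj_prod
  intro l _
  have hkm : k + 1 ≤ m := by omega
  have hcl := sig_comm_lam (m+n) m k l hkm
  have hkey := key (m+n) m k hk1 hkm (by omega)
  set s := sig (m+n) k
  set L := lam (m+n) m l
  calc s * (L * loop (m+n) m k * L⁻¹)
      = (s*L) * loop (m+n) m k * L⁻¹ := by group
    _ = (L*s) * loop (m+n) m k * L⁻¹ := by rw [hcl.eq]
    _ = L * (s * loop (m+n) m k) * L⁻¹ := by group
    _ = L * (loop (m+n) m (k+1) * s) * L⁻¹ := by rw [hkey]
    _ = L * loop (m+n) m (k+1) * (s * L⁻¹) := by group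
    _ = L * loop (m+n) m (k+1) * (L⁻¹ * s) := by rw [hcl.inv_right.eq]
    _ = L * loop (m+n) m (k+1) * L⁻¹ * s := by group
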